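/- The projection operator 𝒯 onto the polar part of a Laurent series is a Rota–Baxter operator of weight −1: for all Laurent series f₁, f₂, one has 𝒯(f₁)𝒯(f₂) = 𝒯(f₁ 𝒯(f₂)) + 𝒯(𝒯(f₁) f₂) − 𝒯(f₁ f₂). -/

import Mathlib

/-- The projection of a formal Laurent series onto its polar part
(the terms of strictly negative degree). -/
noncomputable def polarPart {F : Type*} [Field F] (f : LaurentSeries F) :
    LaurentSeries F :=
  { coeff := fun k => if k < 0 then f.coeff k else 0
    isPWO_support' := f.isPWO_support'.mono (by
      intro k hk
      simp only [Function.mem_support] at hk ⊢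
      intro h
      simp [h] at hk) }

namespace PolarAux

variable {F : Type*} [Field F]

lemma coeff (f : LaurentSeries F) (k : ℤ) :
    (polarPart f).coeff k = if k < 0 then f.coeff k else 0 := rfl

lemma add (f g : LaurentSeries F) :
    polarPart (f + g) = polarPart f + polarPart g := by
  ext k
  simp only [coeff, HahnSeries.coeff_add]
  split <;> simp

lemma mul_neg_supp {f g : LaurentSeries F}
    (hf : ∀ k, 0 ≤ k → f.coeff k = 0) (hg : ∀ k, 0 ≤ k → g.coeff k = 0)
    (k : ℤ) (hk : 0 ≤ k) : (f * g).coeff k = 0 := by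
  rw [HahnSeries.coeff_mul]
  refine Finset.sum_eq_zero fun ij hij => ?_
  rw [Finset.mem_addAntidiagonal] at hij
  obtain ⟨h1, h2, h3⟩ := hij
  rcases le_or_gt 0 ij.1 with h | h
  · simp [hf _ h]
  · have : 0 ≤ ij.2 := by omega
    simp [hg _ this]

lemma mul_nonneg_supp {f g : LaurentSeries F}
    (hf : ∀ k, k < 0 → f.coeff k = 0) (hg : ∀ k, k < 0 → g.coeff k = 0)
    (k : ℤ) (hk : k < 0) : (f * g).coeff k = 0 := by
  rw [HahnSeries.coeff_mul]
  refine Finset.sum_eq_zero fun ij hij => ?_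
  rw [Finset.mem_addAntidiagonal] at hij
  obtain ⟨h1, h2, h3⟩ := hij
  rcases lt_or_ge ij.1 0 with h | h
  · simp [hf _ h]
  · have : ij.2 < 0 := by omega
    simp [hg _ this]

lemma polar_mul_polar (f g : LaurentSeries F) :
    polarPart (polarPart f * polarPart g) = polarPart f * polarPart g := by
  ext k
  rw [coeff]
  split
  · rfl
  · exact (mul_neg_supp (fun k hk => by simp [coeff, not_lt.2 hk])
      (fun k hk => by simp [coeff, not_lt.2 hk]) k (not_lt.1 ‹_›)).symm

lemma polar_reg_mul (f g : LaurentSeries F) :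
    polarPart ((f - polarPart f) * (g - polarPart g)) = 0 := by
  ext k
  rw [coeff, HahnSeries.coeff_zero]
  split
  · exact mul_nonneg_supp (f := f - polarPart f) (g := g - polarPart g)
      (fun k hk => by simp [HahnSeries.coeff_sub, coeff, hk])
      (fun k hk => by simp [HahnSeries.coeff_sub, coeff, hk]) k ‹_›
  · rfl

end PolarAux

/-- The projection `𝒯` onto the polar part of a Laurent series is a Rota–Baxter
operator of weight `-1`:
`𝒯(f₁)𝒯(f₂) = 𝒯(f₁ 𝒯(f₂)) + 𝒯(𝒯(f₁) f₂) − 𝒯(f₁ f₂)`. -/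
theorem stmt_6 {F : Type*} [Field F] (f₁ f₂ : LaurentSeries F) :
    polarPart f₁ * polarPart f₂ =
      polarPart (f₁ * polarPart f₂) + polarPart (polarPart f₁ * f₂)
        - polarPart (f₁ * f₂) := by
  have key := PolarAux.polar_reg_mul f₁ f₂
  have key2 := PolarAux.polar_mul_polar f₁ f₂
  have expand : (f₁ - polarPart f₁) * (f₂ - polarPart f₂)
      = f₁ * f₂ - f₁ * polarPart f₂ - polarPart f₁ * f₂ + polarPart f₁ * polarPart f₂ := by
    ring
  rw [expand] at key
  have : polarPart (f₁ * f₂ - f₁ * polarPart f₂ - polarPart f₁ * f₂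
      + polarPart f₁ * polarPart f₂)
      = polarPart (f₁ * f₂) - polarPart (f₁ * polarPart f₂) - polarPart (polarPart f₁ * f₂)
        + polarPart f₁ * polarPart f₂ := by
    rw [sub_eq_add_neg, sub_eq_add_neg, PolarAux.add, PolarAux.add, PolarAux.add, key2]
    have hneg : ∀ h : LaurentSeries F, polarPart (-h) = -polarPart h := by
      intro h
      ext k
      simp only [PolarAux.coeff, HahnSeries.coeff_neg]
      split <;> simp
    rw [hneg, hneg]
    ring
  rw [this] at key
  linear_combination (norm := abel) key
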